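/- (Theorem 1, column eigenvector part.) Under assumption A1 with parameter θ ≥ 0, the function u*(x) = ∑_{n≥1} e^{θn}·f_n(x) is strictly positive and finite for every x ∈ S, and satisfies ∑_{y∈S} B(x,y)·u*(y) = λ*·u*(x) for every x ∈ S, where λ* = e^{-θ}; moreover u*(z) = 1. -/

import Mathlib

set_option linter.unusedSectionVars false
set_option maxHeartbeats 1000000

open Real

/-- Matrix powers: `B^0 = I`, `B^{n+1}(x,y) = ∑_w B^n(x,w) B(w,y)`. -/
noncomputable def matPow {S : Type*} [DecidableEq S] (B : S → S → ℝ) : ℕ → S → S → ℝ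
  | 0 => fun x y => if x = y then (1 : ℝ) else 0
  | n + 1 => fun x y => ∑' w, matPow B n x w * B w y

/-- First-return quantities: `fret B z n x` is the probability that the killed chain
with sub-stochastic transition matrix `B`, started at `x`, first hits `z` at time `n`
without having been killed: `f_1(x) = B(x,z)`, `f_{n+1}(x) = ∑_{w ≠ z} B(x,w) f_n(w)`.
(The value at `n = 0` is set to `0` by convention.) -/
noncomputable def fret {S : Type*} [DecidableEq S] (B : S → S → ℝ) (z : S) : ℕ → S → ℝ
  | 0 => fun _ => 0
  | 1 => fun x => B x z
  | n + 2 => fun x => ∑' w, if w = z then 0 else B x w * fret B z (n + 1) w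

/-- `grow B z j y` is the probability that the killed chain started at `z` is at `y`
at time `j` without having been killed or having returned to `z`:
`g_0 = δ_z`, and for `j ≥ 1`, `g_j(z) = 0` and `g_j(y) = ∑_x g_{j-1}(x) B(x,y)` for `y ≠ z`. -/
noncomputable def grow {S : Type*} [DecidableEq S] (B : S → S → ℝ) (z : S) : ℕ → S → ℝ
  | 0 => fun y => if y = z then 1 else 0
  | j + 1 => fun y => if y = z then 0 else ∑' x, grow B z j x * B x y

/-- The Perron-Frobenius column eigenvector candidate
`u*(x) = ∑_{n ≥ 1} e^{θ n} f_n(x)`. -/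
noncomputable def uStar {S : Type*} [DecidableEq S] (B : S → S → ℝ) (z : S) (θ : ℝ)
    (x : S) : ℝ :=
  ∑' n : ℕ, Real.exp (θ * ((n : ℝ) + 1)) * fret B z (n + 1) x

/-- The Perron-Frobenius row eigenvector candidate
`η*(y) = ∑_{j ≥ 0} e^{θ j} g_j(y)`. -/
noncomputable def etaStar {S : Type*} [DecidableEq S] (B : S → S → ℝ) (z : S) (θ : ℝ)
    (y : S) : ℝ :=
  ∑' j : ℕ, Real.exp (θ * (j : ℝ)) * grow B z j y


section PF
variable {S : Type*} [Countable S] [DecidableEq S] {B : S → S → ℝ} {z : S}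

lemma fubini_pack {α β : Type*} (F : α → β → ℝ)
    (h0 : ∀ a b, 0 ≤ F a b) (hs : ∀ a, Summable (F a))
    (hS : Summable fun a => ∑' b, F a b) :
    (∀ b, Summable fun a => F a b) ∧ (Summable fun b => ∑' a, F a b) ∧
      (∑' b, ∑' a, F a b) = ∑' a, ∑' b, F a b := by
  have hu : Summable (Function.uncurry F) :=
    (summable_prod_of_nonneg (fun p => h0 p.1 p.2)).mpr ⟨hs, hS⟩
  have hu' : Summable (fun p : β × α => F p.2 p.1) := hu.prod_symm
  have h2 := (summable_prod_of_nonneg (f := fun p : β × α => F p.2 p.1)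
    (fun p => h0 p.2 p.1)).mp hu'
  exact ⟨fun b => h2.1 b, h2.2, Summable.tsum_comm hu⟩

lemma B_le_one (hnn : ∀ x y, 0 ≤ B x y) (hrow : ∀ x, Summable (fun y => B x y))
    (hsub : ∀ x, ∑' y, B x y ≤ 1) (x y : S) : B x y ≤ 1 :=
  le_trans (Summable.le_tsum (hrow x) y fun j _ => hnn x j) (hsub x)

lemma fret_zero (x : S) : fret B z 0 x = 0 := rfl
lemma fret_one (x : S) : fret B z 1 x = B x z := rfl
lemma fret_succ (n : ℕ) (x : S) :
    fret B z (n + 2) x = ∑' w, if w = z then 0 else B x w * fret B z (n + 1) w := rfl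

lemma grow_zero (y : S) : grow B z 0 y = if y = z then 1 else 0 := rfl
lemma grow_succ (j : ℕ) (y : S) :
    grow B z (j + 1) y = if y = z then 0 else ∑' x, grow B z j x * B x y := rfl

lemma matPow_zero (x y : S) : matPow B 0 x y = if x = y then 1 else 0 := rfl
lemma matPow_succ (n : ℕ) (x y : S) :
    matPow B (n + 1) x y = ∑' w, matPow B n x w * B w y := rfl

lemma fret_nonneg (hnn : ∀ x y, 0 ≤ B x y) : ∀ n x, 0 ≤ fret B z n x := by
  have key : ∀ n x, 0 ≤ fret B z (n + 1) x := by
    intro n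
    induction n with
    | zero => intro x; simpa [fret_one] using hnn x z
    | succ m ih =>
      intro x
      rw [fret_succ]
      refine tsum_nonneg fun w => ?_
      by_cases h : w = z
      · simp [h]
      · simp only [h, if_false]; exact mul_nonneg (hnn x w) (ih w)
  intro n x
  cases n with
  | zero => simp [fret_zero]
  | succ m => exact key m x
end PF
section PF2
variable {S : Type*} [Countable S] [DecidableEq S] {B : S → S → ℝ} {z : S}
variable (hnn : ∀ x y, 0 ≤ B x y) (hrow : ∀ x, Summable (fun y => B x y))
variable (hsub : ∀ x, ∑' y, B x y ≤ 1)
include hnn hrow hsub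

lemma summable_ite_fret (n : ℕ) (x : S) (hle : ∀ w, fret B z (n+1) w ≤ 1) :
    Summable (fun w => if w = z then 0 else B x w * fret B z (n + 1) w) := by
  refine Summable.of_nonneg_of_le (fun w => ?_) (fun w => ?_) (hrow x)
  · by_cases h : w = z
    · simp [h]
    · simp only [h, if_false]; exact mul_nonneg (hnn x w) (fret_nonneg hnn _ w)
  · by_cases h : w = z
    · simp [h, hnn x z]
    · simp only [h, if_false]
      exact mul_le_of_le_one_right (hnn x w) (hle w)

lemma fret_le_one : ∀ n x, fret B z n x ≤ 1 := by
  have key : ∀ n x, fret B z (n + 1) x ≤ 1 := by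
    intro n
    induction n with
    | zero => intro x; exact B_le_one hnn hrow hsub x z
    | succ m ih =>
      intro x
      rw [fret_succ]
      refine le_trans (Summable.tsum_le_tsum (fun w => ?_) (summable_ite_fret hnn hrow hsub m x ih) (hrow x)) (hsub x)
      by_cases h : w = z
      · simp [h, hnn x z]
      · simp only [h, if_false]
        exact mul_le_of_le_one_right (hnn x w) (ih w)
  intro n x
  cases n with
  | zero => rw [fret_zero]; norm_num
  | succ m => exact key m x

lemma summable_ite_fret' (n : ℕ) (x : S) :
    Summable (fun w => if w = z then 0 else B x w * fret B z (n + 1) w) :=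
  summable_ite_fret hnn hrow hsub n x (fun w => fret_le_one hnn hrow hsub _ w)

lemma grow_pack : ∀ j : ℕ, (∀ y, 0 ≤ grow B z j y) ∧ Summable (grow B z j) ∧
    ∑' y, grow B z j y ≤ 1 := by
  intro j
  induction j with
  | zero =>
    refine ⟨fun y => by rw [grow_zero]; positivity, ?_, ?_⟩
    · exact summable_of_ne_finset_zero (s := {z}) (fun y hy => by
        rw [grow_zero, if_neg (by simpa using hy)])
    · simp only [grow_zero]
      rw [tsum_ite_eq]
  | succ j ih =>
    obtain ⟨h0, hsumm, hle⟩ := ih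
    have pack := fubini_pack (fun x y => grow B z j x * B x y)
      (fun a b => mul_nonneg (h0 a) (hnn a b))
      (fun a => (hrow a).mul_left _)
      (by
        refine Summable.of_nonneg_of_le (fun a => tsum_nonneg fun b => mul_nonneg (h0 a) (hnn a b))
          (fun a => ?_) hsumm
        rw [tsum_mul_left]
        exact mul_le_of_le_one_right (h0 a) (hsub a))
    have hgle : ∀ y, grow B z (j+1) y ≤ ∑' x, grow B z j x * B x y := by
      intro y
      rw [grow_succ]
      by_cases h : y = z
      · simp only [h, if_true]
        exact tsum_nonneg fun x => mul_nonneg (h0 x) (hnn x z)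
      · simp [h]
    have hg0 : ∀ y, 0 ≤ grow B z (j+1) y := by
      intro y
      rw [grow_succ]
      by_cases h : y = z
      · simp [h]
      · simp only [h, if_false]
        exact tsum_nonneg fun x => mul_nonneg (h0 x) (hnn x y)
    have hgs : Summable (grow B z (j+1)) :=
      Summable.of_nonneg_of_le hg0 hgle pack.2.1
    refine ⟨hg0, hgs, ?_⟩
    calc ∑' y, grow B z (j+1) y ≤ ∑' y, ∑' x, grow B z j x * B x y :=
          Summable.tsum_le_tsum hgle hgs pack.2.1
      _ = ∑' x, ∑' y, grow B z j x * B x y := pack.2.2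
      _ ≤ ∑' x, grow B z j x := by
          refine Summable.tsum_le_tsum (fun x => ?_) ?_ hsumm
          · rw [tsum_mul_left]; exact mul_le_of_le_one_right (h0 x) (hsub x)
          · refine Summable.of_nonneg_of_le
              (fun a => tsum_nonneg fun b => mul_nonneg (h0 a) (hnn a b)) (fun a => ?_) hsumm
            rw [tsum_mul_left]
            exact mul_le_of_le_one_right (h0 a) (hsub a)
      _ ≤ 1 := hle

lemma matPow_pack : ∀ n : ℕ, (∀ x y, 0 ≤ matPow B n x y) ∧ (∀ x, Summable (matPow B n x)) ∧
    (∀ x, ∑' y, matPow B n x y ≤ 1) := by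
  intro n
  induction n with
  | zero =>
    refine ⟨fun x y => by rw [matPow_zero]; positivity, fun x => ?_, fun x => ?_⟩
    · exact summable_of_ne_finset_zero (s := {x}) (fun y hy => by
        rw [matPow_zero, if_neg (by simpa [eq_comm] using hy)])
    · simp only [matPow_zero]
      rw [tsum_eq_single x (fun y hy => by rw [if_neg (by simpa [eq_comm] using hy)])]
      simp
  | succ n ih =>
    obtain ⟨h0, hsumm, hle⟩ := ih
    have main : ∀ x, Summable (matPow B (n+1) x) ∧ ∑' y, matPow B (n+1) x y ≤ 1 := by
      intro x
      have pack := fubini_pack (fun w y => matPow B n x w * B w y)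
        (fun a b => mul_nonneg (h0 x a) (hnn a b))
        (fun a => (hrow a).mul_left _)
        (by
          refine Summable.of_nonneg_of_le
            (fun a => tsum_nonneg fun b => mul_nonneg (h0 x a) (hnn a b)) (fun a => ?_) (hsumm x)
          rw [tsum_mul_left]
          exact mul_le_of_le_one_right (h0 x a) (hsub a))
      have heq : matPow B (n+1) x = fun y => ∑' w, matPow B n x w * B w y := by
        funext y; rw [matPow_succ]
      constructor
      · rw [heq]; exact pack.2.1
      · rw [heq]
        calc ∑' y, ∑' w, matPow B n x w * B w y
            = ∑' w, ∑' y, matPow B n x w * B w y := pack.2.2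
          _ ≤ ∑' w, matPow B n x w := by
              refine Summable.tsum_le_tsum (fun w => ?_) ?_ (hsumm x)
              · rw [tsum_mul_left]; exact mul_le_of_le_one_right (h0 x w) (hsub w)
              · refine Summable.of_nonneg_of_le
                  (fun a => tsum_nonneg fun b => mul_nonneg (h0 x a) (hnn a b))
                  (fun a => ?_) (hsumm x)
                rw [tsum_mul_left]
                exact mul_le_of_le_one_right (h0 x a) (hsub a)
          _ ≤ 1 := hle x
    refine ⟨fun x y => ?_, fun x => (main x).1, fun x => (main x).2⟩
    rw [matPow_succ]
    exact tsum_nonneg fun w => mul_nonneg (h0 x w) (hnn w y)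

lemma matPow_le_one (n : ℕ) (x y : S) : matPow B n x y ≤ 1 :=
  le_trans (Summable.le_tsum ((matPow_pack hnn hrow hsub n).2.1 x) y
    (fun j _ => (matPow_pack hnn hrow hsub n).1 x j)) ((matPow_pack hnn hrow hsub n).2.2 x)

end PF2
section PF3
variable {S : Type*} [Countable S] [DecidableEq S] {B : S → S → ℝ} {z : S}
variable (hnn : ∀ x y, 0 ≤ B x y) (hrow : ∀ x, Summable (fun y => B x y))
variable (hsub : ∀ x, ∑' y, B x y ≤ 1)
include hnn hrow hsub

/-- Left recursion for matrix powers. -/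
lemma matPow_left : ∀ n : ℕ, ∀ x y : S, matPow B (n+1) x y = ∑' w, B x w * matPow B n w y := by
  intro n
  induction n with
  | zero =>
    intro x y
    rw [matPow_succ]
    have l1 : ∀ w : S, matPow B 0 x w * B w y = if w = x then B x y else 0 := by
      intro w
      by_cases h : w = x
      · subst h; simp [matPow_zero]
      · rw [matPow_zero, if_neg (fun hh => h hh.symm), zero_mul, if_neg h]
    have l2 : ∀ w : S, B x w * matPow B 0 w y = if w = y then B x y else 0 := by
      intro w
      by_cases h : w = y
      · subst h; simp [matPow_zero]
      · rw [matPow_zero, if_neg h, mul_zero, if_neg h]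
    rw [tsum_congr l1, tsum_ite_eq, tsum_congr l2, tsum_ite_eq]
  | succ n ih =>
    intro x y
    obtain ⟨mnn, msum, mle⟩ := matPow_pack hnn hrow hsub n
    have pack := fubini_pack (fun w v => B x w * matPow B n w v * B v y)
      (fun w v => mul_nonneg (mul_nonneg (hnn x w) (mnn w v)) (hnn v y))
      (fun w => by
        refine Summable.of_nonneg_of_le
          (fun v => mul_nonneg (mul_nonneg (hnn x w) (mnn w v)) (hnn v y)) (fun v => ?_)
          ((msum w).mul_left (B x w))
        show B x w * matPow B n w v * B v y ≤ B x w * matPow B n w v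
        exact mul_le_of_le_one_right (mul_nonneg (hnn x w) (mnn w v))
          (B_le_one hnn hrow hsub v y))
      (by
        have heq : ∀ w, (∑' v, B x w * matPow B n w v * B v y) = B x w * matPow B (n+1) w y := by
          intro w
          rw [matPow_succ]
          rw [← tsum_mul_left]
          exact tsum_congr fun v => by ring
        rw [funext heq]
        refine Summable.of_nonneg_of_le
          (fun w => mul_nonneg (hnn x w) ((matPow_pack hnn hrow hsub (n+1)).1 w y))
          (fun w => mul_le_of_le_one_right (hnn x w) (matPow_le_one hnn hrow hsub (n+1) w y))
          (hrow x))
    have lhs : matPow B (n+2) x y = ∑' v, ∑' w, B x w * matPow B n w v * B v y := by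
      rw [matPow_succ]
      refine tsum_congr fun v => ?_
      rw [ih x v, ← tsum_mul_right]
    rw [lhs, pack.2.2]
    refine tsum_congr fun w => ?_
    rw [matPow_succ, ← tsum_mul_left]
    exact tsum_congr fun v => by ring

lemma summable_grow_fret (j n : ℕ) :
    Summable (fun w => grow B z j w * fret B z (n+1) w) := by
  obtain ⟨g0, gs, _⟩ := grow_pack hnn hrow hsub (z := z) j
  refine Summable.of_nonneg_of_le
    (fun w => mul_nonneg (g0 w) (fret_nonneg hnn _ w)) (fun w => ?_) gs
  exact mul_le_of_le_one_right (g0 w) (fret_le_one hnn hrow hsub _ w)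

/-- Excursion decomposition: `f_{n+1+j}(z) = ∑_x g_j(x) f_{n+1}(x)`. -/
lemma fret_grow : ∀ j n : ℕ, fret B z (n+1+j) z = ∑' x, grow B z j x * fret B z (n+1) x := by
  intro j
  induction j with
  | zero =>
    intro n
    have l : ∀ x : S, grow B z 0 x * fret B z (n+1) x = if x = z then fret B z (n+1) z else 0 := by
      intro x
      by_cases h : x = z
      · subst h; simp [grow_zero]
      · rw [grow_zero, if_neg h, zero_mul, if_neg h]
    rw [tsum_congr l, tsum_ite_eq]
  | succ j ih =>
    intro n
    obtain ⟨g0, gs, gle⟩ := grow_pack hnn hrow hsub (z := z) j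
    have pack := fubini_pack
      (fun x w => grow B z j x * (if w = z then 0 else B x w * fret B z (n+1) w))
      (fun x w => mul_nonneg (g0 x) (by
        by_cases h : w = z
        · simp [h]
        · simp only [h, if_false]
          exact mul_nonneg (hnn x w) (fret_nonneg hnn _ w)))
      (fun x => (summable_ite_fret' hnn hrow hsub n x).mul_left _)
      (by
        have heq : ∀ x, (∑' w, grow B z j x * (if w = z then 0 else B x w * fret B z (n+1) w))
            = grow B z j x * fret B z (n+2) x := by
          intro x; rw [tsum_mul_left, ← fret_succ]
        rw [funext heq]
        exact summable_grow_fret hnn hrow hsub j (n+1))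
    have step1 : fret B z (n+1+(j+1)) z = ∑' x, grow B z j x * fret B z (n+1+1) x := by
      have : n+1+(j+1) = (n+1)+1+j := by omega
      rw [this, ih (n+1)]
    have step2 : ∀ x, grow B z j x * fret B z (n+2) x
        = ∑' w, grow B z j x * (if w = z then 0 else B x w * fret B z (n+1) w) := by
      intro x; rw [tsum_mul_left, ← fret_succ]
    have step3 : ∀ w, (∑' x, grow B z j x * (if w = z then 0 else B x w * fret B z (n+1) w))
        = grow B z (j+1) w * fret B z (n+1) w := by
      intro w
      by_cases h : w = z
      · simp only [h, if_true, mul_zero, tsum_zero]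
        rw [grow_succ, if_pos rfl, zero_mul]
      · simp only [h, if_false]
        rw [grow_succ, if_neg h, ← tsum_mul_right]
        exact tsum_congr fun x => by ring
    rw [step1, tsum_congr step2, ← pack.2.2, tsum_congr step3]

/-- Last-visit decomposition. -/
lemma lastvisit : ∀ n : ℕ, ∀ y : S,
    matPow B n z y = ∑ j ∈ Finset.range (n+1), matPow B (n-j) z z * grow B z j y := by
  intro n
  induction n with
  | zero =>
    intro y
    rw [Finset.sum_range_one]
    simp only [Nat.sub_zero]
    rw [matPow_zero, grow_zero, matPow_zero, if_pos rfl, one_mul]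
    by_cases h : y = z
    · simp [h]
    · rw [if_neg h, if_neg (fun hh => h hh.symm)]
  | succ n ih =>
    intro y
    by_cases hy : y = z
    · subst hy
      rw [Finset.sum_eq_single 0]
      · simp [grow_zero]
      · intro j _ hj
        obtain ⟨k, rfl⟩ := Nat.exists_eq_succ_of_ne_zero hj
        rw [grow_succ, if_pos rfl, mul_zero]
      · intro h; exact absurd (Finset.mem_range.mpr (by omega)) h
    · have mnn := fun m => (matPow_pack hnn hrow hsub m).1
      have hsum : ∀ j, Summable (fun w => matPow B (n-j) z z * grow B z j w * B w y) := by
        intro j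
        obtain ⟨g0, gs, _⟩ := grow_pack (z := z) (B := B) hnn hrow hsub j
        refine Summable.of_nonneg_of_le
          (fun w => mul_nonneg (mul_nonneg (mnn _ z z) (g0 w)) (hnn w y))
          (fun w => ?_) (gs.mul_left (matPow B (n-j) z z))
        show matPow B (n-j) z z * grow B z j w * B w y ≤ matPow B (n-j) z z * grow B z j w
        exact mul_le_of_le_one_right (mul_nonneg (mnn _ z z) (g0 w)) (B_le_one hnn hrow hsub w y)
      have lhs : matPow B (n+1) z y
          = ∑ j ∈ Finset.range (n+1), ∑' w, matPow B (n-j) z z * grow B z j w * B w y := by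
        rw [matPow_succ, ← Summable.tsum_finsetSum (fun j _ => hsum j)]
        refine tsum_congr fun w => ?_
        rw [ih w, Finset.sum_mul]
      rw [lhs]
      have rterm : ∀ j, (∑' w, matPow B (n-j) z z * grow B z j w * B w y)
          = matPow B (n+1-(j+1)) z z * grow B z (j+1) y := by
        intro j
        rw [grow_succ, if_neg hy, Nat.succ_sub_succ, ← tsum_mul_left]
        exact tsum_congr fun w => by ring
      rw [Finset.sum_congr rfl (fun j _ => rterm j)]
      rw [Finset.sum_range_succ' (fun i => matPow B (n+1-i) z z * grow B z i y) (n+1)]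
      rw [grow_zero, if_neg hy, mul_zero, add_zero]

/-- First-passage decomposition. -/
lemma firstpass : ∀ n : ℕ, ∀ x : S,
    matPow B (n+1) x z = ∑ k ∈ Finset.range (n+1), fret B z (k+1) x * matPow B (n-k) z z := by
  intro n
  induction n with
  | zero =>
    intro x
    rw [Finset.sum_range_one]
    simp only [Nat.sub_zero]
    rw [matPow_succ, matPow_zero, if_pos rfl, mul_one, fret_one]
    have l : ∀ w : S, matPow B 0 x w * B w z = if w = x then B x z else 0 := by
      intro w
      by_cases h : w = x
      · subst h; simp [matPow_zero]
      · rw [matPow_zero, if_neg (fun hh => h hh.symm), zero_mul, if_neg h]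
    rw [tsum_congr l, tsum_ite_eq]
  | succ n ih =>
    intro x
    have mnn := fun m => (matPow_pack hnn hrow hsub m).1
    have lhs : matPow B (n+2) x z = ∑' w, B x w * matPow B (n+1) w z :=
      matPow_left hnn hrow hsub (n+1) x z
    have split : ∀ w : S, B x w * matPow B (n+1) w z
        = (if w = z then B x z * matPow B (n+1) z z else 0)
          + (if w = z then 0 else B x w * matPow B (n+1) w z) := by
      intro w
      by_cases h : w = z
      · subst h; simp
      · simp [h]
    have s1 : Summable (fun w : S => if w = z then B x z * matPow B (n+1) z z else 0) :=
      summable_of_ne_finset_zero (s := {z}) (fun w hw => if_neg (by simpa using hw))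
    have s2 : Summable (fun w : S => if w = z then 0 else B x w * matPow B (n+1) w z) := by
      refine Summable.of_nonneg_of_le (fun w => ?_) (fun w => ?_) (hrow x)
      · by_cases h : w = z
        · simp [h]
        · simp only [h, if_false]; exact mul_nonneg (hnn x w) (mnn _ w z)
      · by_cases h : w = z
        · simp [h, hnn x z]
        · simp only [h, if_false]
          exact mul_le_of_le_one_right (hnn x w) (matPow_le_one hnn hrow hsub (n+1) w z)
    have tail : (∑' w, if w = z then 0 else B x w * matPow B (n+1) w z)
        = ∑ k ∈ Finset.range (n+1), fret B z (k+2) x * matPow B (n-k) z z := by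
      have hsumk : ∀ k ∈ Finset.range (n+1), Summable (fun w : S =>
          (if w = z then 0 else B x w * fret B z (k+1) w) * matPow B (n-k) z z) :=
        fun k _ => (summable_ite_fret' hnn hrow hsub k x).mul_right _
      have inner : ∀ w : S, (if w = z then 0 else B x w * matPow B (n+1) w z)
          = ∑ k ∈ Finset.range (n+1),
              (if w = z then 0 else B x w * fret B z (k+1) w) * matPow B (n-k) z z := by
        intro w
        by_cases h : w = z
        · simp [h]
        · simp only [h, if_false]
          rw [ih w, Finset.mul_sum]
          exact Finset.sum_congr rfl fun k _ => by ring
      rw [tsum_congr inner, Summable.tsum_finsetSum hsumk]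
      refine Finset.sum_congr rfl fun k _ => ?_
      rw [tsum_mul_right, ← fret_succ]
    rw [lhs, tsum_congr split, Summable.tsum_add s1 s2, tsum_ite_eq, tail,
      Finset.sum_range_succ' (fun k => fret B z (k+1) x * matPow B (n+1-k) z z) (n+1)]
    simp only [Nat.succ_sub_succ, Nat.sub_zero, fret_one]
    rw [add_comm]
    congr 1

end PF3
/-- Theorem 1 (column eigenvector part): under A1, `u*` is strictly positive and
finite on `S`, satisfies `B u* = λ* u*` with `λ* = e^{-θ}`, and `u*(z) = 1`. -/
theorem stmt4 {S : Type*} [Countable S] [Nonempty S] [DecidableEq S]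
    (B : S → S → ℝ)
    (hnn : ∀ x y, 0 ≤ B x y)
    (hrow : ∀ x, Summable (fun y => B x y))
    (hsub : ∀ x, ∑' y, B x y ≤ 1)
    (hirr : ∀ x y, ∃ n, 1 ≤ n ∧ 0 < matPow B n x y)
    (z : S) (θ : ℝ) (hθ : 0 ≤ θ)
    (hA1 : ∑' n : ℕ, Real.exp (θ * ((n : ℝ) + 1)) * fret B z (n + 1) z = 1) :
    (∀ x, Summable (fun n : ℕ => Real.exp (θ * ((n : ℝ) + 1)) * fret B z (n + 1) x)) ∧
    (∀ x, 0 < uStar B z θ x) ∧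
    (∀ x, ∑' y, B x y * uStar B z θ y = Real.exp (-θ) * uStar B z θ x) ∧
    uStar B z θ z = 1 := by
  classical
  have ha0 : ∀ (x : S) (n : ℕ), 0 ≤ Real.exp (θ * ((n : ℝ) + 1)) * fret B z (n + 1) x :=
    fun x n => mul_nonneg (Real.exp_nonneg _) (fret_nonneg hnn _ x)
  have haz : Summable (fun n : ℕ => Real.exp (θ * ((n : ℝ) + 1)) * fret B z (n + 1) z) := by
    by_contra h
    rw [tsum_eq_zero_of_not_summable h] at hA1
    norm_num at hA1
  have hax : ∀ x, Summable (fun n : ℕ => Real.exp (θ * ((n : ℝ) + 1)) * fret B z (n + 1) x) := by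
    intro x
    obtain ⟨m, hm1, hmpos⟩ := hirr z x
    rw [lastvisit hnn hrow hsub m x] at hmpos
    have hex : ∃ j ∈ Finset.range (m + 1), 0 < matPow B (m - j) z z * grow B z j x := by
      by_contra hc
      push_neg at hc
      have := Finset.sum_nonpos hc
      linarith
    obtain ⟨j, _, hj⟩ := hex
    have hgj : 0 < grow B z j x := by
      rcases lt_or_ge 0 (grow B z j x) with h | h
      · exact h
      · exfalso
        have h1 := (matPow_pack hnn hrow hsub (m - j)).1 z z
        nlinarith
    have hz2 : Summable (fun n : ℕ => Real.exp (-(θ * j)) / grow B z j x *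
        (Real.exp (θ * (((n + j : ℕ) : ℝ) + 1)) * fret B z (n + j + 1) z)) :=
      Summable.mul_left _ ((summable_nat_add_iff j).mpr haz)
    refine Summable.of_nonneg_of_le (ha0 x) (fun n => ?_) hz2
    have hfr : grow B z j x * fret B z (n + 1) x ≤ fret B z (n + 1 + j) z := by
      rw [fret_grow hnn hrow hsub j n]
      exact Summable.le_tsum (summable_grow_fret hnn hrow hsub j n) x
        (fun w _ => mul_nonneg ((grow_pack (z := z) hnn hrow hsub j).1 w) (fret_nonneg hnn _ w))
    have key : fret B z (n + 1) x ≤ fret B z (n + 1 + j) z / grow B z j x := by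
      rw [le_div_iff₀ hgj]
      linarith [hfr]
    calc Real.exp (θ * ((n : ℝ) + 1)) * fret B z (n + 1) x
        ≤ Real.exp (θ * ((n : ℝ) + 1)) * (fret B z (n + 1 + j) z / grow B z j x) :=
          mul_le_mul_of_nonneg_left key (Real.exp_nonneg _)
      _ = Real.exp (-(θ * j)) / grow B z j x *
            (Real.exp (θ * (((n + j : ℕ) : ℝ) + 1)) * fret B z (n + j + 1) z) := by
          rw [show n + 1 + j = n + j + 1 from by omega]
          have e1 : Real.exp (θ * (((n + j : ℕ) : ℝ) + 1))
              = Real.exp (θ * ((n : ℝ) + 1)) * Real.exp (θ * j) := by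
            rw [← Real.exp_add]; congr 1; push_cast; ring
          rw [e1, Real.exp_neg]
          field_simp
  have hpos : ∀ x, 0 < uStar B z θ x := by
    intro x
    obtain ⟨m, hm1, hmp⟩ := hirr x z
    obtain ⟨m', rfl⟩ : ∃ m', m = m' + 1 := ⟨m - 1, by omega⟩
    rw [firstpass hnn hrow hsub m' x] at hmp
    have hex : ∃ k ∈ Finset.range (m' + 1), 0 < fret B z (k + 1) x * matPow B (m' - k) z z := by
      by_contra hc
      push_neg at hc
      have := Finset.sum_nonpos hc
      linarith
    obtain ⟨k, _, hk⟩ := hex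
    have hf : 0 < fret B z (k + 1) x := by
      rcases lt_or_ge 0 (fret B z (k + 1) x) with h | h
      · exact h
      · exfalso
        have h1 := (matPow_pack hnn hrow hsub (m' - k)).1 z z
        nlinarith
    have h2 : 0 < Real.exp (θ * ((k : ℝ) + 1)) * fret B z (k + 1) x :=
      mul_pos (Real.exp_pos _) hf
    exact lt_of_lt_of_le h2 (Summable.le_tsum (hax x) k fun i _ => ha0 x i)
  refine ⟨hax, hpos, ?_, hA1⟩
  intro x
  have keyn : ∀ n : ℕ, (∑' y, B x y * fret B z (n + 1) y)
      = B x z * fret B z (n + 1) z + fret B z (n + 2) x := by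
    intro n
    have split : ∀ y, B x y * fret B z (n + 1) y
        = (if y = z then B x z * fret B z (n + 1) z else 0)
          + (if y = z then 0 else B x y * fret B z (n + 1) y) := by
      intro y
      by_cases h : y = z
      · subst h; simp
      · simp [h]
    have s1 : Summable (fun y : S => if y = z then B x z * fret B z (n + 1) z else 0) :=
      summable_of_ne_finset_zero (s := {z}) (fun w hw => if_neg (by simpa using hw))
    have s2 := summable_ite_fret' (z := z) hnn hrow hsub n x
    rw [tsum_congr split, Summable.tsum_add s1 s2, tsum_ite_eq, ← fret_succ]
  have t1 : Summable (fun n : ℕ => B x z * (Real.exp (θ * ((n : ℝ) + 1)) * fret B z (n + 1) z)) :=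
    haz.mul_left _
  have t2 : Summable (fun n : ℕ => Real.exp (-θ) *
      (Real.exp (θ * (((n + 1 : ℕ) : ℝ) + 1)) * fret B z (n + 1 + 1) x)) :=
    Summable.mul_left _ ((summable_nat_add_iff 1).mpr (hax x))
  have heq : ∀ n : ℕ, (∑' y, Real.exp (θ * ((n : ℝ) + 1)) * (B x y * fret B z (n + 1) y))
      = B x z * (Real.exp (θ * ((n : ℝ) + 1)) * fret B z (n + 1) z)
        + Real.exp (-θ) * (Real.exp (θ * (((n + 1 : ℕ) : ℝ) + 1)) * fret B z (n + 1 + 1) x) := by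
    intro n
    rw [tsum_mul_left, keyn n, mul_add]
    congr 1
    · ring
    · have hfr2 : fret B z (n + 2) x = fret B z (n + 1 + 1) x := by norm_num
      rw [hfr2, ← mul_assoc, ← Real.exp_add]
      congr 2
      push_cast
      ring
  have pack := fubini_pack (fun (n : ℕ) (y : S) =>
      Real.exp (θ * ((n : ℝ) + 1)) * (B x y * fret B z (n + 1) y))
    (fun n y => mul_nonneg (Real.exp_nonneg _) (mul_nonneg (hnn x y) (fret_nonneg hnn _ y)))
    (fun n => Summable.mul_left _ (Summable.of_nonneg_of_le
      (fun y => mul_nonneg (hnn x y) (fret_nonneg hnn _ y))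
      (fun y => mul_le_of_le_one_right (hnn x y) (fret_le_one hnn hrow hsub _ y)) (hrow x)))
    (by rw [funext heq]; exact t1.add t2)
  have stepA : ∀ y, B x y * uStar B z θ y
      = ∑' n : ℕ, Real.exp (θ * ((n : ℝ) + 1)) * (B x y * fret B z (n + 1) y) := by
    intro y
    show B x y * ∑' n : ℕ, Real.exp (θ * ((n : ℝ) + 1)) * fret B z (n + 1) y = _
    rw [← tsum_mul_left]
    exact tsum_congr fun n => by ring
  have shift := Summable.tsum_eq_zero_add (hax x)
  have e : Real.exp (-θ) * Real.exp θ = 1 := by rw [← Real.exp_add]; simp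
  have ha00 : Real.exp (θ * ((0 : ℕ) + 1 : ℝ)) * fret B z (0 + 1) x = Real.exp θ * B x z := by
    rw [fret_one]
    norm_num
  calc ∑' y, B x y * uStar B z θ y
      = ∑' y, ∑' n : ℕ, Real.exp (θ * ((n : ℝ) + 1)) * (B x y * fret B z (n + 1) y) :=
        tsum_congr stepA
    _ = ∑' n : ℕ, ∑' y, Real.exp (θ * ((n : ℝ) + 1)) * (B x y * fret B z (n + 1) y) := pack.2.2
    _ = ∑' n : ℕ, (B x z * (Real.exp (θ * ((n : ℝ) + 1)) * fret B z (n + 1) z)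
          + Real.exp (-θ) * (Real.exp (θ * (((n + 1 : ℕ) : ℝ) + 1)) * fret B z (n + 1 + 1) x)) :=
        tsum_congr heq
    _ = B x z * (∑' n : ℕ, Real.exp (θ * ((n : ℝ) + 1)) * fret B z (n + 1) z)
          + Real.exp (-θ) * ∑' n : ℕ,
            (Real.exp (θ * (((n + 1 : ℕ) : ℝ) + 1)) * fret B z (n + 1 + 1) x) := by
        rw [Summable.tsum_add t1 t2, tsum_mul_left, tsum_mul_left]
    _ = Real.exp (-θ) * uStar B z θ x := by
        rw [hA1]
        have husz : uStar B z θ x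
            = Real.exp (θ * ((0 : ℕ) + 1 : ℝ)) * fret B z (0 + 1) x
              + ∑' n : ℕ, (Real.exp (θ * (((n + 1 : ℕ) : ℝ) + 1)) * fret B z (n + 1 + 1) x) :=
          shift
        rw [ha00] at husz
        have : (∑' n : ℕ, (Real.exp (θ * (((n + 1 : ℕ) : ℝ) + 1)) * fret B z (n + 1 + 1) x))
            = uStar B z θ x - Real.exp θ * B x z := by linarith
        rw [this]
        linear_combination (-(B x z)) * e
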